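/- Let (X, μ) be a probability space such that every atom x₀ of μ satisfies μ({x₀}) ≤ μ(X \ {x₀}). Then there exists a measurable function u : X → ℂ with |u| = 1 a.e. and ∫ u dμ = 0. -/

import Mathlib

open MeasureTheory Set Filter
open scoped ENNReal

lemma exists_median (ν : Measure ℝ) [IsProbabilityMeasure ν] :
    ∃ t : ℝ, ν (Set.Iio t) ≤ 1/2 ∧ 1/2 ≤ ν (Set.Iic t) := by
  set S : Set ℝ := {r : ℝ | (1:ℝ≥0∞)/2 ≤ ν (Set.Iic r)} with hS
  -- S nonempty
  have hne : S.Nonempty := by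
    have hmono : Monotone (fun n : ℕ => Set.Iic (n : ℝ)) := fun m n h => Iic_subset_Iic.2 (by exact_mod_cast h)
    have huniv : (⋃ n : ℕ, Set.Iic (n : ℝ)) = univ := by
      ext x; simp only [mem_iUnion, mem_Iic, mem_univ, iff_true]
      obtain ⟨n, hn⟩ := exists_nat_ge x; exact ⟨n, hn⟩
    have htend := tendsto_measure_iUnion_atTop (μ := ν) hmono
    rw [huniv, measure_univ] at htend
    have := htend.eventually (eventually_ge_nhds (show (1:ℝ≥0∞)/2 < 1 by norm_num))
    obtain ⟨n, hn⟩ := this.exists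
    exact ⟨n, hn⟩
  -- S bounded below
  have hbdd : BddBelow S := by
    have hanti : Antitone (fun n : ℕ => Set.Iic (-(n : ℝ))) := fun m n h => Iic_subset_Iic.2 (by exact_mod_cast neg_le_neg (show (m:ℝ) ≤ n by exact_mod_cast h))
    have hempty : (⋂ n : ℕ, Set.Iic (-(n : ℝ))) = ∅ := by
      ext x; simp only [mem_iInter, mem_Iic, mem_empty_iff_false, iff_false, not_forall]
      obtain ⟨n, hn⟩ := exists_nat_ge (-x + 1)
      exact ⟨n, by push_neg; linarith⟩
    have htend := tendsto_measure_iInter_atTop (μ := ν)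
      (fun n => (measurableSet_Iic).nullMeasurableSet) hanti ⟨0, measure_ne_top ν _⟩
    rw [hempty, measure_empty] at htend
    have := htend.eventually (eventually_lt_nhds (show (0:ℝ≥0∞) < 1/2 by norm_num))
    obtain ⟨n, hn⟩ := this.exists
    refine ⟨-(n:ℝ), fun s hs => ?_⟩
    by_contra hlt
    push_neg at hlt
    have : ν (Set.Iic s) ≤ ν (Set.Iic (-(n:ℝ))) := measure_mono (Iic_subset_Iic.2 hlt.le)
    exact absurd (hs.trans this) (not_le.2 hn)
  set t : ℝ := sInf S with ht
  refine ⟨t, ?_, ?_⟩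


  · -- ν (Iio t) ≤ 1/2
    have hmono : Monotone (fun n : ℕ => Set.Iic (t - ((n:ℝ)+1)⁻¹)) := by
      intro m n h
      apply Iic_subset_Iic.2
      have : ((n:ℝ)+1)⁻¹ ≤ ((m:ℝ)+1)⁻¹ := by
        apply inv_anti₀ (by positivity) (by exact_mod_cast (by linarith [show (m:ℝ) ≤ n from by exact_mod_cast h] : (m:ℝ)+1 ≤ (n:ℝ)+1))
      linarith
    have hun : (⋃ n : ℕ, Set.Iic (t - ((n:ℝ)+1)⁻¹)) = Set.Iio t := by
      ext x
      simp only [mem_iUnion, mem_Iic, mem_Iio]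
      constructor
      · rintro ⟨n, hn⟩
        have : (0:ℝ) < ((n:ℝ)+1)⁻¹ := by positivity
        linarith
      · intro hx
        obtain ⟨n, hn⟩ := exists_nat_one_div_lt (show (0:ℝ) < t - x by linarith)
        rw [one_div] at hn
        exact ⟨n, by linarith⟩
    have htend := tendsto_measure_iUnion_atTop (μ := ν) hmono
    rw [hun] at htend
    refine le_of_tendsto htend (Eventually.of_forall fun n => ?_)
    have hnot : t - ((n:ℝ)+1)⁻¹ ∉ S := by
      intro hmem
      have := csInf_le hbdd hmem
      have hpos : (0:ℝ) < ((n:ℝ)+1)⁻¹ := by positivity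
      rw [← ht] at this; linarith
    exact le_of_not_ge hnot
  · -- 1/2 ≤ ν (Iic t)
    have hanti : Antitone (fun n : ℕ => Set.Iic (t + ((n:ℝ)+1)⁻¹)) := by
      intro m n h
      apply Iic_subset_Iic.2
      have : ((n:ℝ)+1)⁻¹ ≤ ((m:ℝ)+1)⁻¹ := by
        apply inv_anti₀ (by positivity) (by exact_mod_cast (by linarith [show (m:ℝ) ≤ n from by exact_mod_cast h] : (m:ℝ)+1 ≤ (n:ℝ)+1))
      linarith
    have hin : (⋂ n : ℕ, Set.Iic (t + ((n:ℝ)+1)⁻¹)) = Set.Iic t := by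
      ext x
      simp only [mem_iInter, mem_Iic]
      constructor
      · intro h
        by_contra hx
        push_neg at hx
        obtain ⟨n, hn⟩ := exists_nat_one_div_lt (show (0:ℝ) < x - t by linarith)
        rw [one_div] at hn
        have := h n; linarith
      · intro hx n
        have : (0:ℝ) < ((n:ℝ)+1)⁻¹ := by positivity
        linarith
    have htend := tendsto_measure_iInter_atTop (μ := ν)
      (fun n => measurableSet_Iic.nullMeasurableSet) hanti ⟨0, measure_ne_top ν _⟩
    rw [hin] at htend
    refine ge_of_tendsto htend (Eventually.of_forall fun n => ?_)
    have hlt : sInf S < t + ((n:ℝ)+1)⁻¹ := by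
      have h0 : (0:ℝ) < ((n:ℝ)+1)⁻¹ := by positivity
      calc sInf S = t := ht.symm
        _ < t + ((n:ℝ)+1)⁻¹ := by linarith
    obtain ⟨s, hsS, hs⟩ := (csInf_lt_iff hbdd hne).1 hlt
    exact hsS.trans (measure_mono (Iic_subset_Iic.2 hs.le))

lemma triangle_units {a b c : ℝ} (ha : 0 ≤ a) (hb : 0 ≤ b) (hc : 0 ≤ c)
    (hsum : a + b + c = 1) (ha2 : a ≤ 1/2) (hb2 : b ≤ 1/2) (hc2 : c ≤ 1/2) :
    ∃ z₁ z₂ z₃ : ℂ, ‖z₁‖ = 1 ∧ ‖z₂‖ = 1 ∧ ‖z₃‖ = 1 ∧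
      (a : ℂ) * z₁ + (b : ℂ) * z₂ + (c : ℂ) * z₃ = 0 := by
  set g : ℝ → ℝ := fun θ => ‖(a : ℂ) * Complex.exp (θ * Complex.I) + (b : ℂ)‖ with hg
  have hcont : ContinuousOn g (Icc 0 Real.pi) := by
    apply Continuous.continuousOn; continuity
  have hg0 : g 0 = a + b := by
    simp [hg, Complex.exp_zero]
    rw [show (a:ℂ) + (b:ℂ) = ((a + b : ℝ) : ℂ) by push_cast; ring,
      Complex.norm_real, Real.norm_eq_abs, abs_of_nonneg (by linarith)]
  have hgpi : g Real.pi = |b - a| := by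
    simp [hg, Complex.exp_pi_mul_I]
    rw [show -(a:ℂ) + (b:ℂ) = ((b - a : ℝ) : ℂ) by push_cast; ring, Complex.norm_real, Real.norm_eq_abs]
  have hmem : c ∈ Icc (g Real.pi) (g 0) := by
    constructor
    · rw [hgpi, abs_le]; constructor <;> linarith
    · rw [hg0]; linarith
  obtain ⟨θ, hθmem, hθ⟩ := intermediate_value_Icc' Real.pi_nonneg hcont hmem
  set w : ℂ := (a : ℂ) * Complex.exp (θ * Complex.I) + (b : ℂ) with hw
  have hwnorm : ‖w‖ = c := hθ
  by_cases hc0 : c = 0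
  · refine ⟨Complex.exp (θ * Complex.I), 1, 1, Complex.norm_exp_ofReal_mul_I θ, by simp, by simp, ?_⟩
    have : w = 0 := by rw [← norm_eq_zero, hwnorm, hc0]
    rw [hc0]; push_cast; rw [mul_one, mul_one]
    simpa [hw] using this
  · refine ⟨Complex.exp (θ * Complex.I), 1, -w / c, Complex.norm_exp_ofReal_mul_I θ, by simp, ?_, ?_⟩
    · rw [norm_div, norm_neg, hwnorm, Complex.norm_real, Real.norm_eq_abs,
        abs_of_nonneg hc, div_self hc0]
    · have hcC : (c : ℂ) ≠ 0 := by exact_mod_cast hc0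
      field_simp
      rw [← hw]; ring


/-- On a probability space in which no atom has measure exceeding that of its
complement, there exists a unimodular measurable function with zero integral. -/
theorem stmt_7 {X : Type*} [MeasurableSpace X] [StandardBorelSpace X]
    (μ : Measure X) [IsProbabilityMeasure μ]
    (hatoms : ∀ x₀ : X, μ {x₀} ≤ μ ({x₀}ᶜ)) :
    ∃ u : X → ℂ, Measurable u ∧ (∀ᵐ x ∂μ, ‖u x‖ = 1) ∧ ∫ x, u x ∂μ = 0 := by
  obtain ⟨f, hf⟩ := exists_measurableEmbedding_real X
  set ν : Measure ℝ := μ.map f with hν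
  have hprob : IsProbabilityMeasure ν := Measure.isProbabilityMeasure_map hf.measurable.aemeasurable
  obtain ⟨t, hIio, hIic⟩ := exists_median ν
  set A : Set X := f ⁻¹' (Set.Iio t) with hA
  set B : Set X := f ⁻¹' {t} with hB
  set C : Set X := f ⁻¹' (Set.Ioi t) with hC
  have hAm : MeasurableSet A := hf.measurable measurableSet_Iio
  have hBm : MeasurableSet B := hf.measurable (measurableSet_singleton t)
  have hCm : MeasurableSet C := hf.measurable measurableSet_Ioi
  have hmapIio : μ A = ν (Set.Iio t) := (Measure.map_apply hf.measurable measurableSet_Iio).symm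
  have hmapB : μ B = ν {t} := (Measure.map_apply hf.measurable (measurableSet_singleton t)).symm
  have hmapIoi : μ C = ν (Set.Ioi t) := (Measure.map_apply hf.measurable measurableSet_Ioi).symm
  -- bound on the atom
  have hμB : μ B ≤ 1/2 := by
    rcases Set.eq_empty_or_nonempty B with h | ⟨x₀, hx₀⟩
    · rw [h, measure_empty]; exact zero_le
    · have hBx : B = {x₀} := by
        apply Set.eq_singleton_iff_unique_mem.2
        refine ⟨hx₀, fun y hy => hf.injective ?_⟩
        rw [Set.mem_preimage, Set.mem_singleton_iff] at hx₀ hy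
        rw [hy, hx₀]
      rw [hBx]
      have h1 : μ {x₀} + μ ({x₀}ᶜ) = 1 := by
        rw [measure_add_measure_compl (measurableSet_singleton x₀), measure_univ]
      have h2 : μ {x₀} + μ {x₀} ≤ 1 := by
        calc μ {x₀} + μ {x₀} ≤ μ {x₀} + μ ({x₀}ᶜ) := add_le_add le_rfl (hatoms x₀)
          _ = 1 := h1
      by_contra hcon
      push_neg at hcon
      have : (1:ℝ≥0∞) < 1 := by
        calc (1:ℝ≥0∞) = 1/2 + 1/2 := (ENNReal.add_halves 1).symm
          _ < μ {x₀} + μ {x₀} := ENNReal.add_lt_add hcon hcon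
          _ ≤ 1 := h2
      exact absurd this (lt_irrefl _)
  have hμC : μ C ≤ 1/2 := by
    have hcompl : ν (Set.Iic t) + ν (Set.Ioi t) = 1 := by
      rw [show Set.Ioi t = (Set.Iic t)ᶜ by rw [Set.compl_Iic],
        measure_add_measure_compl measurableSet_Iic, measure_univ]
    rw [hmapIoi]
    by_contra hcon
    push_neg at hcon
    have : (1:ℝ≥0∞) < 1 := by
      calc (1:ℝ≥0∞) = 1/2 + 1/2 := (ENNReal.add_halves 1).symm
        _ < ν (Set.Iic t) + ν (Set.Ioi t) :=
            ENNReal.add_lt_add_of_le_of_lt (by norm_num) hIic hcon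
        _ = 1 := hcompl
    exact absurd this (lt_irrefl _)
  have hμA : μ A ≤ 1/2 := by rw [hmapIio]; exact hIio
  -- to real numbers
  set a : ℝ := (μ A).toReal with ha
  set b : ℝ := (μ B).toReal with hb
  set c : ℝ := (μ C).toReal with hc
  have half : ((1:ℝ≥0∞)/2).toReal = 1/2 := by norm_num
  have ha2 : a ≤ 1/2 := by rw [ha, ← half]; exact ENNReal.toReal_mono (by norm_num) hμA
  have hb2 : b ≤ 1/2 := by rw [hb, ← half]; exact ENNReal.toReal_mono (by norm_num) hμB
  have hc2 : c ≤ 1/2 := by rw [hc, ← half]; exact ENNReal.toReal_mono (by norm_num) hμC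
  have ha0 : 0 ≤ a := ENNReal.toReal_nonneg
  have hb0 : 0 ≤ b := ENNReal.toReal_nonneg
  have hc0 : 0 ≤ c := ENNReal.toReal_nonneg
  -- the three sets partition X
  have hdAB : Disjoint A B := by
    rw [Set.disjoint_left]
    intro x hxA hxB
    rw [hA, Set.mem_preimage, Set.mem_Iio] at hxA
    rw [hB, Set.mem_preimage, Set.mem_singleton_iff] at hxB
    exact absurd hxB (ne_of_lt hxA)
  have hdABC : Disjoint (A ∪ B) C := by
    rw [Set.disjoint_left]
    intro x hxAB hxC
    rw [hC, Set.mem_preimage, Set.mem_Ioi] at hxC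
    rcases hxAB with hxA | hxB
    · rw [hA, Set.mem_preimage, Set.mem_Iio] at hxA; linarith
    · rw [hB, Set.mem_preimage, Set.mem_singleton_iff] at hxB; linarith [hxB ▸ hxC]
  have hABCuniv : A ∪ B ∪ C = Set.univ := by
    ext x
    simp only [Set.mem_union, Set.mem_univ, iff_true, hA, hB, hC, Set.mem_preimage,
      Set.mem_Iio, Set.mem_Ioi, Set.mem_singleton_iff]
    rcases lt_trichotomy (f x) t with h | h | h
    · exact Or.inl (Or.inl h)
    · exact Or.inl (Or.inr h)
    · exact Or.inr h
  have hsumE : μ A + μ B + μ C = 1 := by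
    rw [← measure_union hdAB hBm, ← measure_union hdABC hCm, hABCuniv, measure_univ]
  have hsum : a + b + c = 1 := by
    rw [ha, hb, hc, ← ENNReal.toReal_add (measure_ne_top μ A) (measure_ne_top μ B),
      ← ENNReal.toReal_add (by exact ENNReal.add_ne_top.2 ⟨measure_ne_top μ A, measure_ne_top μ B⟩) (measure_ne_top μ C),
      hsumE, ENNReal.toReal_one]
  obtain ⟨z₁, z₂, z₃, hz₁, hz₂, hz₃, hzero⟩ := triangle_units ha0 hb0 hc0 hsum ha2 hb2 hc2
  refine ⟨fun x => A.indicator (fun _ => z₁) x + B.indicator (fun _ => z₂) x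
      + C.indicator (fun _ => z₃) x, ?_, ?_, ?_⟩
  · exact ((Measurable.indicator measurable_const hAm).add
      (Measurable.indicator measurable_const hBm)).add
      (Measurable.indicator measurable_const hCm)
  · refine Eventually.of_forall fun x => ?_
    have memA : ∀ y, y ∈ A ↔ f y < t := fun y => Iff.rfl
    have memB : ∀ y, y ∈ B ↔ f y = t := fun y => Iff.rfl
    have memC : ∀ y, y ∈ C ↔ t < f y := fun y => Iff.rfl
    beta_reduce
    rcases lt_trichotomy (f x) t with h | h | h
    · rw [Set.indicator_of_mem ((memA x).2 h),
        Set.indicator_of_notMem (fun hx => absurd ((memB x).1 hx) (ne_of_lt h)),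
        Set.indicator_of_notMem (fun hx => absurd ((memC x).1 hx) (not_lt.2 h.le))]
      simpa using hz₁
    · rw [Set.indicator_of_notMem (fun hx => absurd ((memA x).1 hx) (by rw [h]; exact lt_irrefl t)),
        Set.indicator_of_mem ((memB x).2 h),
        Set.indicator_of_notMem (fun hx => absurd ((memC x).1 hx) (by rw [h]; exact lt_irrefl t))]
      simpa using hz₂
    · rw [Set.indicator_of_notMem (fun hx => absurd ((memA x).1 hx) (not_lt.2 h.le)),
        Set.indicator_of_notMem (fun hx => absurd ((memB x).1 hx) (ne_of_gt h)),
        Set.indicator_of_mem ((memC x).2 h)]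
      simpa using hz₃
  · have hiA : Integrable (A.indicator fun _ => z₁) μ := (integrable_const z₁).indicator hAm
    have hiB : Integrable (B.indicator fun _ => z₂) μ := (integrable_const z₂).indicator hBm
    have hiC : Integrable (C.indicator fun _ => z₃) μ := (integrable_const z₃).indicator hCm
    beta_reduce
    rw [integral_add (μ := μ)
        (f := fun x => A.indicator (fun _ => z₁) x + B.indicator (fun _ => z₂) x)
        (g := fun x => C.indicator (fun _ => z₃) x) (hiA.add hiB) hiC,
      integral_add hiA hiB,
      integral_indicator_const z₁ hAm, integral_indicator_const z₂ hBm,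
      integral_indicator_const z₃ hCm]
    rw [measureReal_def, measureReal_def, measureReal_def, ← ha, ← hb, ← hc]
    simpa [Complex.real_smul] using hzero
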